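/- Let G be a finite simple graph and VC(G) its set of vertex covers, with vertex toggles t_v. For distinct vertices u, v, the toggles t_u and t_v commute on VC(G) if and only if there is no edge between u and v in G. -/

import Mathlib

/-- `X` is a vertex cover of the graph `G`: every edge is incident to a vertex of `X`. -/
def IsVertexCover {V : Type*} (G : SimpleGraph V) (X : Set V) : Prop :=
  ∀ x y, G.Adj x y → x ∈ X ∨ y ∈ X

open Classical in
/-- The vertex cover toggle `t_v`. -/
noncomputable def vcToggle {V : Type*} (G : SimpleGraph V) (v : V) (X : Set V) : Set V :=
  if IsVertexCover G (symmDiff X {v}) then symmDiff X {v} else X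

section aux
variable {V : Type*} {G : SimpleGraph V} {X : Set V} {u v : V}

lemma mem_sd_ne {S : Set V} {a : V} (h : a ≠ v) : a ∈ symmDiff S {v} ↔ a ∈ S := by
  simp [Set.mem_symmDiff, h]

lemma mem_sd_self {S : Set V} : v ∈ symmDiff S {v} ↔ v ∉ S := by
  simp [Set.mem_symmDiff]

lemma sd_comm' (X : Set V) (u v : V) :
    symmDiff (symmDiff X {u}) {v} = symmDiff (symmDiff X {v}) {u} := by
  rw [symmDiff_assoc, symmDiff_comm ({u} : Set V), ← symmDiff_assoc]

-- L1 : A, B covers → C cover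
lemma L1 (huv : u ≠ v) (hadj : ¬ G.Adj u v)
    (hA : IsVertexCover G (symmDiff X {u})) (hB : IsVertexCover G (symmDiff X {v})) :
    IsVertexCover G (symmDiff (symmDiff X {u}) {v}) := by
  intro x y hxy
  by_cases hxv : x = v
  · subst hxv
    have hyv : y ≠ x := (G.ne_of_adj hxy).symm
    have hyu : y ≠ u := fun h => hadj (G.adj_symm (h ▸ hxy))
    rcases hB x y hxy with h | h
    · left
      rw [mem_sd_self, mem_sd_ne huv.symm]
      rwa [mem_sd_self] at h
    · right
      rw [mem_sd_ne hyv, mem_sd_ne hyu]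
      rwa [mem_sd_ne hyv] at h
  · by_cases hyv : y = v
    · subst hyv
      have hxu : x ≠ u := fun h => hadj (h ▸ hxy)
      rcases hB x y hxy with h | h
      · left
        rw [mem_sd_ne hxv, mem_sd_ne hxu]
        rwa [mem_sd_ne hxv] at h
      · right
        rw [mem_sd_self, mem_sd_ne huv.symm]
        rwa [mem_sd_self] at h
    · rcases hA x y hxy with h | h
      · exact Or.inl ((mem_sd_ne hxv).mpr h)
      · exact Or.inr ((mem_sd_ne hyv).mpr h)

-- L2 : X, C covers → B cover
lemma L2 (huv : u ≠ v) (hadj : ¬ G.Adj u v) (hX : IsVertexCover G X)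
    (hC : IsVertexCover G (symmDiff (symmDiff X {u}) {v})) :
    IsVertexCover G (symmDiff X {v}) := by
  intro x y hxy
  by_cases hxv : x = v
  · subst hxv
    have hyv : y ≠ x := (G.ne_of_adj hxy).symm
    have hyu : y ≠ u := fun h => hadj (G.adj_symm (h ▸ hxy))
    rcases hC x y hxy with h | h
    · left
      rw [mem_sd_self]
      rw [mem_sd_self, mem_sd_ne huv.symm] at h
      exact h
    · right
      rw [mem_sd_ne hyv]
      rw [mem_sd_ne hyv, mem_sd_ne hyu] at h
      exact h
  · by_cases hyv : y = v
    · subst hyv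
      have hxu : x ≠ u := fun h => hadj (h ▸ hxy)
      rcases hC x y hxy with h | h
      · left
        rw [mem_sd_ne hxv]
        rw [mem_sd_ne hxv, mem_sd_ne hxu] at h
        exact h
      · right
        rw [mem_sd_self]
        rw [mem_sd_self, mem_sd_ne huv.symm] at h
        exact h
    · rcases hX x y hxy with h | h
      · exact Or.inl ((mem_sd_ne hxv).mpr h)
      · exact Or.inr ((mem_sd_ne hyv).mpr h)

end aux

/-- in the vertex cover toggle group of a finite graph `G`, for distinct
vertices `u, v`, the toggles `t_u` and `t_v` commute if and only if there is no edge
between `u` and `v`. -/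
theorem vcToggle_commute_iff {V : Type*} [Fintype V] (G : SimpleGraph V)
    (u v : V) (huv : u ≠ v) :
    (∀ X : Set V, IsVertexCover G X →
        vcToggle G u (vcToggle G v X) = vcToggle G v (vcToggle G u X))
      ↔ ¬ G.Adj u v := by
  constructor
  · intro h hadj
    have huniv : IsVertexCover G (Set.univ : Set V) := fun x y _ => Or.inl trivial
    have key := h Set.univ huniv
    have compl_cover : ∀ w : V, IsVertexCover G (({w} : Set V)ᶜ) := by
      intro w x y hxy
      by_cases hx : x = w
      · right
        simp only [Set.mem_compl_iff, Set.mem_singleton_iff]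
        exact fun hy => (G.ne_of_adj hxy) (hx.trans hy.symm)
      · exact Or.inl (by simpa using hx)
    have e1 : ∀ w : V, symmDiff (Set.univ : Set V) {w} = ({w} : Set V)ᶜ := by
      intro w; ext a; simp [Set.mem_symmDiff]
    have e2 : ∀ w w' : V, w ≠ w' →
        symmDiff (({w} : Set V)ᶜ) {w'} = (({w, w'} : Set V))ᶜ := by
      intro w w' hww; ext a
      by_cases h : a = w' <;> by_cases h2 : a = w <;>
        simp [Set.mem_symmDiff, h, h2, hww, hww.symm]
    have notcov : ∀ w w' : V, G.Adj w w' → ¬ IsVertexCover G (({w, w'} : Set V))ᶜ := by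
      intro w w' hww hcov
      rcases hcov w w' hww with h | h <;> simp at h
    have tv : vcToggle G v Set.univ = ({v} : Set V)ᶜ := by
      rw [vcToggle, e1, if_pos (compl_cover v)]
    have tu : vcToggle G u Set.univ = ({u} : Set V)ᶜ := by
      rw [vcToggle, e1, if_pos (compl_cover u)]
    have tuv : vcToggle G u (({v} : Set V)ᶜ) = ({v} : Set V)ᶜ := by
      rw [vcToggle, e2 v u huv.symm, if_neg (notcov v u (G.adj_symm hadj))]
    have tvu : vcToggle G v (({u} : Set V)ᶜ) = ({u} : Set V)ᶜ := by
      rw [vcToggle, e2 u v huv, if_neg (notcov u v hadj)]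
    rw [tv, tu, tuv, tvu] at key
    have : v ∈ ({v} : Set V)ᶜ := key ▸ (by simp [huv.symm] : v ∈ ({u} : Set V)ᶜ)
    simp at this
  · intro hadj X hX
    have hadj' : ¬ G.Adj v u := fun h => hadj (G.adj_symm h)
    by_cases hA : IsVertexCover G (symmDiff X {u}) <;>
      by_cases hB : IsVertexCover G (symmDiff X {v})
    · have hC : IsVertexCover G (symmDiff (symmDiff X {u}) {v}) := L1 huv hadj hA hB
      have hC' : IsVertexCover G (symmDiff (symmDiff X {v}) {u}) := by
        rwa [← sd_comm']
      have ev : vcToggle G v X = symmDiff X {v} := by rw [vcToggle, if_pos hB]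
      have eu : vcToggle G u X = symmDiff X {u} := by rw [vcToggle, if_pos hA]
      rw [ev, eu, show vcToggle G u (symmDiff X {v}) = symmDiff (symmDiff X {v}) {u}
            from by rw [vcToggle, if_pos hC'],
          show vcToggle G v (symmDiff X {u}) = symmDiff (symmDiff X {u}) {v}
            from by rw [vcToggle, if_pos hC], sd_comm']
    · have hC : ¬ IsVertexCover G (symmDiff (symmDiff X {u}) {v}) :=
        fun h => hB (L2 huv hadj hX h)
      have ev : vcToggle G v X = X := by rw [vcToggle, if_neg hB]
      have eu : vcToggle G u X = symmDiff X {u} := by rw [vcToggle, if_pos hA]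
      rw [ev, eu, show vcToggle G v (symmDiff X {u}) = symmDiff X {u}
            from by rw [vcToggle, if_neg hC]]
    · have hC' : ¬ IsVertexCover G (symmDiff (symmDiff X {v}) {u}) :=
        fun h => hA (L2 huv.symm hadj' hX h)
      have ev : vcToggle G v X = symmDiff X {v} := by rw [vcToggle, if_pos hB]
      have eu : vcToggle G u X = X := by rw [vcToggle, if_neg hA]
      rw [ev, eu, show vcToggle G u (symmDiff X {v}) = symmDiff X {v}
            from by rw [vcToggle, if_neg hC']]
      exact ev.symm
    · have ev : vcToggle G v X = X := by rw [vcToggle, if_neg hB]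
      have eu : vcToggle G u X = X := by rw [vcToggle, if_neg hA]
      rw [ev, eu]
      exact ev.symm
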